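/- arXiv:2309.13843 — 4 statements merged into one kernel-verified Lean document; each statement's English description precedes it below -/
import Mathlib

section
/- Let λ_0, ..., λ_n be the barycentric coordinates on an n-simplex T. For α, β ∈ T^n_k, the function φ_α(x) = (1/α!) ∏_{i=0}^n ∏_{j=0}^{α_i - 1} (k λ_i(x) - j) satisfies φ_α(x_β) = δ_{α,β}, where x_β = (1/k) Σ_i β_i x_i is the interpolation point associated with β. -/
lemma aux_fact_prod (m : ℕ) : ∏ j ∈ Finset.range m, ((m : ℝ) - j) = m.factorial := by
  have h1 : ∏ j ∈ Finset.range m, ((m : ℝ) - j)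
      = ∏ j ∈ Finset.range m, ((m - j : ℕ) : ℝ) := by
    refine Finset.prod_congr rfl fun j hj => ?_
    rw [Nat.cast_sub (le_of_lt (Finset.mem_range.mp hj))]
  rw [h1, ← Nat.cast_prod]
  congr 1
  have h2 := Finset.prod_range_reflect (fun j => j + 1) m
  calc ∏ j ∈ Finset.range m, (m - j)
      = ∏ j ∈ Finset.range m, (m - 1 - j + 1) := by
        refine Finset.prod_congr rfl fun j hj => ?_
        have hj' := Finset.mem_range.mp hj
        omega
    _ = ∏ j ∈ Finset.range m, (j + 1) := h2
    _ = m.factorial := Finset.prod_range_add_one_eq_factorial m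

/-- The Lagrange interpolation basis function `φ_α` takes the value `δ_{αβ}` at the
interpolation point `x_β` (the point with barycentric coordinates `β/k`). -/
theorem stmt3 (n k : ℕ) (hk : 0 < k)
    (b : AffineBasis (Fin (n + 1)) ℝ (EuclideanSpace ℝ (Fin n)))
    (α β : Fin (n + 1) → ℕ) (hα : ∑ i, α i = k) (hβ : ∑ i, β i = k) :
    (∏ i, (Nat.factorial (α i) : ℝ))⁻¹ *
        ∏ i, ∏ j ∈ Finset.range (α i),
          ((k : ℝ) * b.coord i
              (Finset.univ.affineCombination ℝ (fun i => b i) (fun i => (β i : ℝ) / k)) - (j : ℝ))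
      = if α = β then 1 else 0 := by
  have hk' : (k : ℝ) ≠ 0 := Nat.cast_ne_zero.mpr hk.ne'
  have hw : ∑ i, (β i : ℝ) / k = 1 := by
    rw [← Finset.sum_div, ← Nat.cast_sum, hβ, div_self hk']
  have hcoord : ∀ i, b.coord i
      (Finset.univ.affineCombination ℝ (fun i => b i) (fun i => (β i : ℝ) / k))
      = (β i : ℝ) / k := fun i =>
    b.coord_apply_combination_of_mem (Finset.mem_univ i) hw
  have hkb : ∀ i, (k : ℝ) * ((β i : ℝ) / k) = β i := fun i => by
    field_simp
  simp only [hcoord, hkb]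
  by_cases h : α = β
  · subst h
    rw [if_pos rfl]
    have hprod : ∏ i, ∏ j ∈ Finset.range (α i), ((α i : ℝ) - j)
        = ∏ i, ((α i).factorial : ℝ) :=
      Finset.prod_congr rfl fun i _ => aux_fact_prod (α i)
    rw [hprod, inv_mul_cancel₀]
    exact Finset.prod_ne_zero_iff.mpr fun i _ =>
      Nat.cast_ne_zero.mpr (Nat.factorial_ne_zero (α i))
  · rw [if_neg h]
    have hex : ∃ i, β i < α i := by
      by_contra hno
      push_neg at hno
      exact h (funext fun i =>
        (Finset.sum_eq_sum_iff_of_le fun i _ => hno i).mp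
          (hα.trans hβ.symm) i (Finset.mem_univ i))
    obtain ⟨i, hi⟩ := hex
    apply mul_eq_zero_of_right
    refine Finset.prod_eq_zero (Finset.mem_univ i) ?_
    refine Finset.prod_eq_zero (Finset.mem_range.mpr hi) ?_
    simp
end

section
/- The functions {φ_α : α ∈ T^n_k}, where φ_α(x) = (1/α!) ∏_{i=0}^n ∏_{j=0}^{α_i - 1} (k λ_i(x) - j), form a basis of the space P_k(T) of polynomials of degree at most k on an n-simplex T. -/
open MvPolynomial Finset

noncomputable section

variable (n k : ℕ) (b : AffineBasis (Fin (n + 1)) ℝ (Fin n → ℝ))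

/-- barycentric coordinate as a polynomial -/
def coordPoly (i : Fin (n+1)) : MvPolynomial (Fin n) ℝ :=
  (∑ j, MvPolynomial.C ((b.coord i).linear (fun l => if j = l then 1 else 0)) * MvPolynomial.X j)
    + MvPolynomial.C (b.coord i 0)

lemma eval_coordPoly (i : Fin (n+1)) (x : Fin n → ℝ) :
    MvPolynomial.eval x (coordPoly n b i) = b.coord i x := by
  have h : b.coord i x = (b.coord i).linear x + b.coord i 0 := by
    have := (b.coord i).map_vadd 0 x
    simpa [vadd_eq_add] using this
  rw [h, LinearMap.pi_apply_eq_sum_univ ((b.coord i).linear) x]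
  simp [coordPoly, mul_comm, smul_eq_mul]

lemma totalDegree_coordPoly (i : Fin (n+1)) : (coordPoly n b i).totalDegree ≤ 1 := by
  apply le_trans (MvPolynomial.totalDegree_add _ _)
  simp only [max_le_iff, MvPolynomial.totalDegree_C]
  constructor
  · apply le_trans (MvPolynomial.totalDegree_finset_sum _ _)
    apply Finset.sup_le
    intro j _
    apply le_trans (MvPolynomial.totalDegree_mul _ _)
    rw [MvPolynomial.totalDegree_C, MvPolynomial.totalDegree_X]
  · omega

/-- the Lagrange basis polynomial -/
def lagPoly (α : Fin (n+1) → ℕ) : MvPolynomial (Fin n) ℝ :=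
  MvPolynomial.C (∏ i, (Nat.factorial (α i) : ℝ))⁻¹ *
    ∏ i, ∏ j ∈ Finset.range (α i),
      (MvPolynomial.C (k:ℝ) * coordPoly n b i - MvPolynomial.C (j:ℝ))

lemma eval_lagPoly (α : Fin (n+1) → ℕ) (x : Fin n → ℝ) :
    MvPolynomial.eval x (lagPoly n k b α) =
      (∏ i, (Nat.factorial (α i) : ℝ))⁻¹ *
        ∏ i, ∏ j ∈ Finset.range (α i), ((k : ℝ) * b.coord i x - (j : ℝ)) := by
  simp [lagPoly, eval_coordPoly]

lemma totalDegree_lagPoly (α : Fin (n+1) → ℕ) (hα : ∑ i, α i = k) :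
    (lagPoly n k b α).totalDegree ≤ k := by
  apply le_trans (MvPolynomial.totalDegree_mul _ _)
  rw [MvPolynomial.totalDegree_C, zero_add]
  apply le_trans (MvPolynomial.totalDegree_finset_prod _ _)
  refine le_trans (Finset.sum_le_sum (fun i _ => ?_)) (le_of_eq hα)
  apply le_trans (MvPolynomial.totalDegree_finset_prod _ _)
  calc ∑ j ∈ Finset.range (α i),
        (MvPolynomial.C (k:ℝ) * coordPoly n b i - MvPolynomial.C (j:ℝ)).totalDegree
      ≤ ∑ _j ∈ Finset.range (α i), 1 := by
        apply Finset.sum_le_sum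
        intro j _
        apply le_trans (MvPolynomial.totalDegree_sub _ _)
        simp only [max_le_iff, MvPolynomial.totalDegree_C]
        refine ⟨le_trans (MvPolynomial.totalDegree_mul _ _) ?_, by omega⟩
        rw [MvPolynomial.totalDegree_C, zero_add]
        exact totalDegree_coordPoly n b i
    _ = α i := by simp

lemma prod_sub_cast (m : ℕ) : (∏ j ∈ range m, ((m:ℝ) - j)) = m.factorial := by
  rw [← Finset.prod_range_reflect]
  push_cast [← Finset.prod_range_add_one_eq_factorial]
  apply Finset.prod_congr rfl
  intro j hj
  have := Finset.mem_range.mp hj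
  push_cast [Nat.sub_sub]
  rw [Nat.cast_sub (by omega)]
  push_cast
  ring

def node (β : Fin (n+1) → ℕ) : Fin n → ℝ :=
  Finset.univ.affineCombination ℝ (fun i => b i) (fun i => (β i : ℝ)/k)

lemma coord_node (hk : k ≠ 0) (β : Fin (n+1) → ℕ) (hβ : ∑ i, β i = k) (i : Fin (n+1)) :
    b.coord i (node n k b β) = β i / k := by
  refine b.coord_apply_combination_of_mem (Finset.mem_univ i) ?_
  rw [← Finset.sum_div]
  rw [show ∑ i, ((β i : ℝ)) = ((∑ i, β i : ℕ) : ℝ) by push_cast; ring, hβ]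
  field_simp

lemma eval_delta (hk : k ≠ 0) (α β : Fin (n+1) → ℕ) (hα : ∑ i, α i = k)
    (hβ : ∑ i, β i = k) :
    (∏ i, (Nat.factorial (α i) : ℝ))⁻¹ *
        ∏ i, ∏ j ∈ Finset.range (α i), ((k : ℝ) * b.coord i (node n k b β) - (j : ℝ)) =
      if α = β then 1 else 0 := by
  have hc : ∀ i, (k : ℝ) * b.coord i (node n k b β) = β i := by
    intro i
    rw [coord_node n k b hk β hβ i]
    field_simp
  simp only [hc]
  by_cases h : α = β
  · subst h
    rw [if_pos rfl, Finset.prod_congr rfl (fun i _ => prod_sub_cast (α i)),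
      inv_mul_cancel₀ (ne_of_gt (Finset.prod_pos fun i _ => by positivity))]
  · rw [if_neg h]
    -- there is i with β i < α i
    have : ∃ i, β i < α i := by
      by_contra hcon
      push_neg at hcon
      apply h
      funext i
      exact (Finset.sum_eq_sum_iff_of_le (fun i _ => hcon i)).mp
        (by rw [hα, hβ]) i (Finset.mem_univ i)
    obtain ⟨i, hi⟩ := this
    apply mul_eq_zero_of_right
    apply Finset.prod_eq_zero (Finset.mem_univ i)
    apply Finset.prod_eq_zero (Finset.mem_range.mpr hi)
    simp

-- contradiction above: need α i = β i for all i from ∀ i, α i ≤ β i and equal sums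

instance fintypeLattice : Fintype {α : Fin (n + 1) → ℕ // ∑ i, α i = k} := by
  classical
  apply Fintype.subtype ((Finset.Icc (0 : Fin (n+1) → ℕ) (fun _ => k)).filter
    (fun α => ∑ i, α i = k))
  intro α
  simp only [Finset.mem_filter, Finset.mem_Icc]
  constructor
  · intro h; exact h.2
  · intro h
    refine ⟨⟨fun i => Nat.zero_le _, fun i => ?_⟩, h⟩
    calc α i ≤ ∑ j, α j := Finset.single_le_sum (fun j _ => Nat.zero_le _) (Finset.mem_univ i)
    _ = k := h

theorem lag_li : LinearIndependent ℝ (fun α : {α : Fin (n + 1) → ℕ // ∑ i, α i = k} =>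
    fun x : Fin n → ℝ =>
      (∏ i, (Nat.factorial (α.1 i) : ℝ))⁻¹ *
        ∏ i, ∏ j ∈ Finset.range (α.1 i), ((k : ℝ) * b.coord i x - (j : ℝ))) := by
  classical
  by_cases hk : k = 0
  · subst hk
    haveI : Unique {α : Fin (n + 1) → ℕ // ∑ i, α i = 0} := by
      refine ⟨⟨⟨0, by simp⟩⟩, fun α => Subtype.ext (funext fun i => ?_)⟩
      have := α.2
      rw [Finset.sum_eq_zero_iff] at this
      simp [this i (Finset.mem_univ i)]
    apply linearIndependent_unique_iff.mpr
    intro h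
    have h0 := congrFun h 0
    have hd : (default : {α : Fin (n + 1) → ℕ // ∑ i, α i = 0}).1 = 0 := by
      funext i
      have h2 := (default : {α : Fin (n + 1) → ℕ // ∑ i, α i = 0}).2
      rw [Finset.sum_eq_zero_iff] at h2
      exact h2 i (Finset.mem_univ i)
    simp [hd] at h0
  · rw [Fintype.linearIndependent_iff]
    intro g hg β
    have hx := congrFun hg (node n k b β.1)
    simp only [Finset.sum_apply, Pi.smul_apply, smul_eq_mul, Pi.zero_apply] at hx
    rw [Finset.sum_congr rfl (fun α _ =>
      by rw [eval_delta n k b hk α.1 β.1 α.2 β.2])] at hx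
    simpa [mul_ite, Subtype.coe_inj, Finset.sum_ite_eq'] using hx

def evalL : MvPolynomial (Fin n) ℝ →ₗ[ℝ] ((Fin n → ℝ) → ℝ) where
  toFun p := fun x => MvPolynomial.eval x p
  map_add' p q := funext fun x => by simp
  map_smul' c p := funext fun x => by simp

/-- bijection between degree-≤k multi-indices on `Fin n` and the simplicial lattice -/
def latticeEquiv : {d : Fin n →₀ ℕ // (d.sum fun _ e => e) ≤ k} ≃
    {α : Fin (n + 1) → ℕ // ∑ i, α i = k} where
  toFun d := ⟨Fin.cons (k - ∑ i, d.1 i) (⇑d.1), by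
    have hs : (d.1.sum fun _ e => e) = ∑ i, d.1 i :=
      Finsupp.sum_fintype _ _ (fun _ => rfl)
    have hle : ∑ i, d.1 i ≤ k := by rw [← hs]; exact d.2
    rw [Fin.sum_cons]
    omega⟩
  invFun α := ⟨Finsupp.equivFunOnFinite.symm (fun i : Fin n => α.1 i.succ), by
    have hs : ((Finsupp.equivFunOnFinite.symm (fun i : Fin n => α.1 i.succ)).sum
        fun _ e => e) = ∑ i : Fin n, α.1 i.succ := by
      rw [Finsupp.sum_fintype _ _ (fun _ => rfl)]
      simp
    rw [hs]
    have := α.2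
    rw [Fin.sum_univ_succ] at this
    omega⟩
  left_inv d := by
    apply Subtype.ext
    simp only [Fin.cons_succ]
    exact Finsupp.equivFunOnFinite.symm_apply_eq.mpr rfl
  right_inv α := by
    apply Subtype.ext
    have hc : ⇑(Finsupp.equivFunOnFinite.symm (fun i : Fin n => α.1 i.succ)) =
        fun i : Fin n => α.1 i.succ := rfl
    simp only [hc]
    have hα := α.2
    rw [Fin.sum_univ_succ] at hα
    rw [show k - (∑ i : Fin n, α.1 i.succ) = α.1 0 by omega]
    exact Fin.cons_self_tail α.1

theorem lag_span : Submodule.span ℝ (Set.range (fun α : {α : Fin (n + 1) → ℕ // ∑ i, α i = k} =>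
      fun x : Fin n → ℝ =>
        (∏ i, (Nat.factorial (α.1 i) : ℝ))⁻¹ *
          ∏ i, ∏ j ∈ Finset.range (α.1 i), ((k : ℝ) * b.coord i x - (j : ℝ)))) =
    Submodule.map (evalL n) (MvPolynomial.restrictTotalDegree (Fin n) ℝ k) := by
  classical
  haveI hft : Fintype ↑{m : Fin n →₀ ℕ | (m.sum fun _ e => e) ≤ k} :=
    Fintype.ofEquiv _ (latticeEquiv n k).symm
  let B := MvPolynomial.basisRestrictSupport ℝ {m : Fin n →₀ ℕ | (m.sum fun _ e => e) ≤ k}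
  haveI hfd : FiniteDimensional ℝ (MvPolynomial.restrictTotalDegree (Fin n) ℝ k) :=
    Module.Finite.of_basis B
  haveI : FiniteDimensional ℝ
      ((MvPolynomial.restrictTotalDegree (Fin n) ℝ k).map (evalL n)) :=
    Module.Finite.map _ _
  have hle : Submodule.span ℝ (Set.range (fun α : {α : Fin (n + 1) → ℕ // ∑ i, α i = k} =>
      fun x : Fin n → ℝ =>
        (∏ i, (Nat.factorial (α.1 i) : ℝ))⁻¹ *
          ∏ i, ∏ j ∈ Finset.range (α.1 i), ((k : ℝ) * b.coord i x - (j : ℝ)))) ≤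
      (MvPolynomial.restrictTotalDegree (Fin n) ℝ k).map (evalL n) := by
    rw [Submodule.span_le]
    rintro _ ⟨α, rfl⟩
    exact ⟨lagPoly n k b α.1,
      (MvPolynomial.mem_restrictTotalDegree _ _ _).mpr (totalDegree_lagPoly n k b α.1 α.2),
      funext fun x => eval_lagPoly n k b α.1 x⟩
  refine (Submodule.eq_of_le_of_finrank_le hle ?_)
  calc Module.finrank ℝ ((MvPolynomial.restrictTotalDegree (Fin n) ℝ k).map (evalL n))
      ≤ Module.finrank ℝ (MvPolynomial.restrictTotalDegree (Fin n) ℝ k) :=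
        Submodule.finrank_map_le _ _
    _ = Fintype.card ↑{m : Fin n →₀ ℕ | (m.sum fun _ e => e) ≤ k} :=
        Module.finrank_eq_card_basis B
    _ = Fintype.card {α : Fin (n + 1) → ℕ // ∑ i, α i = k} :=
        Fintype.card_congr (latticeEquiv n k)
    _ = _ := (finrank_span_eq_card (lag_li n k b)).symm

end

/-- The Lagrange functions `φ_α`, `α ∈ T^n_k`, form a basis of the space of polynomial
functions of total degree at most `k` on an `n`-simplex (given by an affine basis `b`,
whose barycentric coordinates are `b.coord i`). -/
theorem stmt4 (n k : ℕ) (b : AffineBasis (Fin (n + 1)) ℝ (Fin n → ℝ)) :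
    LinearIndependent ℝ (fun α : {α : Fin (n + 1) → ℕ // ∑ i, α i = k} =>
        fun x : Fin n → ℝ =>
          (∏ i, (Nat.factorial (α.1 i) : ℝ))⁻¹ *
            ∏ i, ∏ j ∈ Finset.range (α.1 i), ((k : ℝ) * b.coord i x - (j : ℝ))) ∧
      (Submodule.span ℝ (Set.range (fun α : {α : Fin (n + 1) → ℕ // ∑ i, α i = k} =>
          fun x : Fin n → ℝ =>
            (∏ i, (Nat.factorial (α.1 i) : ℝ))⁻¹ *
              ∏ i, ∏ j ∈ Finset.range (α.1 i), ((k : ℝ) * b.coord i x - (j : ℝ)))) :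
          Set ((Fin n → ℝ) → ℝ)) =
        {g : (Fin n → ℝ) → ℝ | ∃ p : MvPolynomial (Fin n) ℝ,
          p.totalDegree ≤ k ∧ ∀ x, g x = MvPolynomial.eval x p} := by
  refine ⟨lag_li n k b, ?_⟩
  rw [lag_span n k b]
  ext g
  simp only [SetLike.mem_coe, Submodule.mem_map, MvPolynomial.mem_restrictTotalDegree,
    Set.mem_setOf_eq]
  constructor
  · rintro ⟨p, hp, rfl⟩
    exact ⟨p, hp, fun x => rfl⟩
  · rintro ⟨p, hp, hg⟩
    exact ⟨p, hp, (funext fun x => (hg x).symm)⟩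
end

section
/- Let f be an ℓ-dimensional face of an n-simplex T, and for i ∉ f let F_i denote the facet of T opposite vertex x_i, with unit normal n_{F_i}, and let n^f_{f+i} denote a unit vector normal to f and tangent to the (ℓ+1)-face f+i. Then the vectors n̂_{F_i} := n^f_{f+i} / (n^f_{f+i} · n_{F_i}), i ∈ f*, form a basis of the normal plane N^f of f that is dual to {n_{F_i} : i ∈ f*}, i.e., n̂_{F_i} · n_{F_j} = δ_{ij} for i, j ∈ f*. -/
open scoped RealInnerProductSpace

/-- For a linearly independent family, spans over index sets intersect in the span over the
intersection of the index sets. -/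
lemma aux_span_inf {V : Type*} [AddCommGroup V] [Module ℝ V] {ι : Type*} {v : ι → V}
    (hv : LinearIndependent ℝ v) (s t : Set ι) :
    Submodule.span ℝ (v '' s) ⊓ Submodule.span ℝ (v '' t) ≤ Submodule.span ℝ (v '' (s ∩ t)) := by
  rintro w hw
  obtain ⟨hws, hwt⟩ := Submodule.mem_inf.1 hw
  have hsplit : Submodule.span ℝ (v '' s) =
      Submodule.span ℝ (v '' (s ∩ t)) ⊔ Submodule.span ℝ (v '' (s \ t)) := by
    rw [← Submodule.span_union, ← Set.image_union, Set.inter_union_diff]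
  rw [hsplit, Submodule.mem_sup] at hws
  obtain ⟨a, ha, b, hb, rfl⟩ := hws
  have hat : a ∈ Submodule.span ℝ (v '' t) :=
    Submodule.span_mono (Set.image_mono Set.inter_subset_right) ha
  have hbt : b ∈ Submodule.span ℝ (v '' t) := by
    have := Submodule.sub_mem _ hwt hat
    simpa using this
  have hd : Disjoint (Submodule.span ℝ (v '' (s \ t))) (Submodule.span ℝ (v '' t)) :=
    hv.disjoint_span_image Set.disjoint_sdiff_left
  have hb0 : b = 0 := Submodule.disjoint_def.1 hd b hb hbt
  simpa [hb0] using ha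

/-- For an `ℓ`-face `f` of a nondegenerate `n`-simplex with vertices `x`, the rescaled
vectors `n̂_{F_i} = n^f_{f+i} / (n^f_{f+i} · n_{F_i})`, `i ∉ f`, form a basis of the normal
plane of `f` dual to the facet normals `{n_{F_i} : i ∉ f}`. Here `nF i` is the unit normal
of the facet opposite vertex `x i`, and `nf i` is a unit vector normal to `f` and tangent
to the face `f + i`. -/
theorem stmt6 (n : ℕ)
    (x : Fin (n + 1) → EuclideanSpace ℝ (Fin n)) (hx : AffineIndependent ℝ x)
    (f : Finset (Fin (n + 1))) (hf : f.Nonempty)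
    (nF nf : Fin (n + 1) → EuclideanSpace ℝ (Fin n))
    (hnF1 : ∀ i ∉ f, ‖nF i‖ = 1)
    (hnFperp : ∀ i ∉ f, nF i ∈ (vectorSpan ℝ (x '' {j | j ≠ i}))ᗮ)
    (hnf1 : ∀ i ∉ f, ‖nf i‖ = 1)
    (hnftan : ∀ i ∉ f, nf i ∈ vectorSpan ℝ (x '' (insert i ↑f)))
    (hnfperp : ∀ i ∉ f, nf i ∈ (vectorSpan ℝ (x '' ↑f))ᗮ) :
    (∀ i ∉ f, ∀ j ∉ f,
        ⟪(⟪nf i, nF i⟫)⁻¹ • nf i, nF j⟫ = if i = j then (1 : ℝ) else 0) ∧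
      LinearIndependent ℝ (fun i : {i : Fin (n + 1) // i ∉ f} =>
        (⟪nf i.1, nF i.1⟫)⁻¹ • nf i.1) ∧
      Submodule.span ℝ ((fun i => (⟪nf i, nF i⟫)⁻¹ • nf i) '' {i | i ∉ f}) =
        (vectorSpan ℝ (x '' ↑f))ᗮ := by
  classical
  obtain ⟨p, hp⟩ := hf
  set K : Submodule ℝ (EuclideanSpace ℝ (Fin n)) := vectorSpan ℝ (x '' (↑f : Set (Fin (n + 1))))
    with hK
  -- the subtracted family, linearly independent by affine independence
  set g : {k : Fin (n + 1) // k ≠ p} → EuclideanSpace ℝ (Fin n) :=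
    fun k => x k.1 -ᵥ x p with hg
  have hgli : LinearIndependent ℝ g :=
    (affineIndependent_iff_linearIndependent_vsub ℝ x p).1 hx
  -- vectorSpan over sets containing p is the span of the g's over that set
  have key : ∀ S : Set (Fin (n + 1)), p ∈ S →
      vectorSpan ℝ (x '' S) = Submodule.span ℝ (g '' {k | k.1 ∈ S}) := by
    intro S hpS
    rw [vectorSpan_eq_span_vsub_set_right ℝ (Set.mem_image_of_mem x hpS)]
    have h1 : (· -ᵥ x p) '' (x '' S) = (fun k => x k -ᵥ x p) '' S := by
      rw [← Set.image_comp]; rfl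
    have h2 : (fun k => x k -ᵥ x p) '' S =
        insert (0 : EuclideanSpace ℝ (Fin n)) (g '' {k | k.1 ∈ S}) := by
      ext v
      constructor
      · rintro ⟨k, hk, rfl⟩
        by_cases hkp : k = p
        · subst hkp; left; simp
        · right; exact ⟨⟨k, hkp⟩, hk, rfl⟩
      · rintro (hv | ⟨k, hk, rfl⟩)
        · exact ⟨p, hpS, by simp [hv]⟩
        · exact ⟨k.1, hk, rfl⟩
    rw [h1, h2, Submodule.span_insert_zero]
  -- off-diagonal orthogonality
  have horth : ∀ i ∉ f, ∀ j ∉ f, i ≠ j → ⟪nf i, nF j⟫ = 0 := by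
    intro i hi j hj hij
    have hsub : x '' (insert i (↑f : Set (Fin (n + 1)))) ⊆ x '' {k | k ≠ j} := by
      apply Set.image_mono
      rintro k (rfl | hk)
      · exact hij
      · rintro rfl; exact hj hk
    have hmem : nf i ∈ vectorSpan ℝ (x '' {k | k ≠ j}) :=
      vectorSpan_mono ℝ hsub (hnftan i hi)
    exact (Submodule.mem_orthogonal _ _).1 (hnFperp j hj) (nf i) hmem
  -- diagonal inner product is nonzero
  have hdiag : ∀ i ∉ f, ⟪nf i, nF i⟫ ≠ 0 := by
    intro i hi h0
    have hpi : p ≠ i := by rintro rfl; exact hi hp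
    -- n ≥ 1 since p ≠ i in Fin (n+1)
    have hn1 : 1 ≤ n := by
      have h2 : 1 < Fintype.card (Fin (n + 1)) := Fintype.one_lt_card_iff.2 ⟨p, i, hpi⟩
      simp at h2; omega
    set L : Submodule ℝ (EuclideanSpace ℝ (Fin n)) := vectorSpan ℝ (x '' {j | j ≠ i}) with hL
    have hLrank : Module.finrank ℝ L = n - 1 := by
      have him : x '' {j | j ≠ i} = ↑(({i}ᶜ : Finset (Fin (n + 1))).image x) := by
        simp only [Finset.coe_image, Finset.coe_compl, Finset.coe_singleton]
        rfl
      have hcard : ({i}ᶜ : Finset (Fin (n + 1))).card = (n - 1) + 1 := by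
        rw [Finset.card_compl]
        simp
        omega
      rw [hL, him]
      exact hx.finrank_vectorSpan_image_finset hcard
    have hLo : Module.finrank ℝ Lᗮ = 1 := by
      have := Submodule.finrank_add_finrank_orthogonal (K := L)
      rw [hLrank] at this
      have hdim : Module.finrank ℝ (EuclideanSpace ℝ (Fin n)) = n := by simp
      omega
    have hnFne : nF i ≠ 0 := by
      intro h; have := hnF1 i hi; rw [h] at this; simp at this
    have hspan : (ℝ ∙ nF i) = Lᗮ := by
      apply Submodule.eq_of_le_of_finrank_le
      · rw [Submodule.span_singleton_le_iff_mem]; exact hnFperp i hi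
      · rw [hLo, finrank_span_singleton hnFne]
    have hnfL : nf i ∈ L := by
      have h1 : nf i ∈ (ℝ ∙ nF i)ᗮ :=
        Submodule.mem_orthogonal_singleton_iff_inner_right.2 (by rwa [real_inner_comm])
      rw [hspan, Submodule.orthogonal_orthogonal] at h1
      exact h1
    -- nf i ∈ vectorSpan (insert i f) ⊓ L ≤ K
    have hnfK : nf i ∈ K := by
      have h1 := key (insert i (↑f : Set (Fin (n + 1)))) (Set.mem_insert_of_mem _ hp)
      have h2 := key {j | j ≠ i} hpi
      have h3 := key (↑f : Set (Fin (n + 1))) hp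
      have hinter : ({k : {k : Fin (n + 1) // k ≠ p} | k.1 ∈ insert i (↑f : Set (Fin (n + 1)))}
          ∩ {k | k.1 ∈ {j | j ≠ i}}) = {k | k.1 ∈ (↑f : Set (Fin (n + 1)))} := by
        ext k
        simp only [Set.mem_inter_iff, Set.mem_setOf_eq, Set.mem_insert_iff]
        constructor
        · rintro ⟨rfl | hk, hki⟩
          · exact absurd rfl hki
          · exact hk
        · intro hk; exact ⟨Or.inr hk, fun h => hi (h ▸ hk)⟩
      have hmem : nf i ∈ Submodule.span ℝ
            (g '' {k | k.1 ∈ insert i (↑f : Set (Fin (n + 1)))}) ⊓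
          Submodule.span ℝ (g '' {k | k.1 ∈ {j | j ≠ i}}) := by
        rw [Submodule.mem_inf, ← h1, ← h2]
        exact ⟨hnftan i hi, hnfL⟩
      have := aux_span_inf hgli _ _ hmem
      rw [hinter, ← h3] at this
      exact this
    have hbot : nf i = 0 := by
      have := (Submodule.orthogonal_disjoint K)
      exact Submodule.disjoint_def.1 this _ hnfK (hnfperp i hi)
    have := hnf1 i hi
    rw [hbot] at this
    simp at this
  -- the duality relations
  have hdual : ∀ i ∉ f, ∀ j ∉ f,
      ⟪(⟪nf i, nF i⟫)⁻¹ • nf i, nF j⟫ = if i = j then (1 : ℝ) else 0 := by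
    intro i hi j hj
    rw [real_inner_smul_left]
    by_cases hij : i = j
    · subst hij
      rw [if_pos rfl, inv_mul_cancel₀ (hdiag i hi)]
    · rw [if_neg hij, horth i hi j hj hij, mul_zero]
  refine ⟨hdual, ?_, ?_⟩
  · -- linear independence
    rw [Fintype.linearIndependent_iff]
    intro c hc j
    have h0 : ⟪∑ i : {i : Fin (n + 1) // i ∉ f},
        c i • ((⟪nf i.1, nF i.1⟫)⁻¹ • nf i.1), nF j.1⟫ = 0 := by
      rw [hc]; simp
    rw [sum_inner] at h0
    have hterm : ∀ i : {i : Fin (n + 1) // i ∉ f},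
        ⟪c i • ((⟪nf i.1, nF i.1⟫)⁻¹ • nf i.1), nF j.1⟫ = if i = j then c i else 0 := by
      intro i
      rw [real_inner_smul_left, hdual i.1 i.2 j.1 j.2]
      by_cases hij : i = j
      · subst hij; simp
      · have : i.1 ≠ j.1 := fun h => hij (Subtype.ext h)
        simp [this, hij]
    rw [Finset.sum_congr rfl (fun i _ => hterm i), Finset.sum_ite_eq' Finset.univ j
      (fun i => c i)] at h0
    simpa using h0
  · -- span equals the orthogonal complement
    set w : Fin (n + 1) → EuclideanSpace ℝ (Fin n) := fun i => (⟪nf i, nF i⟫)⁻¹ • nf i with hw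
    have hle : Submodule.span ℝ (w '' {i | i ∉ f}) ≤ Kᗮ := by
      rw [Submodule.span_le]
      rintro v ⟨i, hi, rfl⟩
      exact Submodule.smul_mem _ _ (hnfperp i hi)
    apply Submodule.eq_of_le_of_finrank_le hle
    -- finrank computations
    have hKrank : Module.finrank ℝ K = f.card - 1 := by
      have him : x '' (↑f : Set (Fin (n + 1))) = ↑(f.image x) := by
        simp [Finset.coe_image]
      have hcard : f.card = (f.card - 1) + 1 := by
        have : 1 ≤ f.card := Finset.card_pos.2 ⟨p, hp⟩
        omega
      rw [hK, him]
      exact hx.finrank_vectorSpan_image_finset hcard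
    have hKorank : Module.finrank ℝ Kᗮ = n + 1 - f.card := by
      have := Submodule.finrank_add_finrank_orthogonal (K := K)
      rw [hKrank] at this
      have hdim : Module.finrank ℝ (EuclideanSpace ℝ (Fin n)) = n := by simp
      have hfc : 1 ≤ f.card := Finset.card_pos.2 ⟨p, hp⟩
      have hfc2 : f.card ≤ n + 1 := by
        simpa using Finset.card_le_card (Finset.subset_univ f)
      omega
    -- linear independence of the family (reproved here to compute the rank of the span)
    have hli : LinearIndependent ℝ (fun i : {i : Fin (n + 1) // i ∉ f} => w i.1) := by
      rw [Fintype.linearIndependent_iff]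
      intro c hc j
      have h0 : ⟪∑ i : {i : Fin (n + 1) // i ∉ f}, c i • w i.1, nF j.1⟫ = 0 := by
        rw [hc]; simp
      rw [sum_inner] at h0
      have hterm : ∀ i : {i : Fin (n + 1) // i ∉ f},
          ⟪c i • w i.1, nF j.1⟫ = if i = j then c i else 0 := by
        intro i
        rw [hw]
        rw [real_inner_smul_left, hdual i.1 i.2 j.1 j.2]
        by_cases hij : i = j
        · subst hij; simp
        · have : i.1 ≠ j.1 := fun h => hij (Subtype.ext h)
          simp [this, hij]
      rw [Finset.sum_congr rfl (fun i _ => hterm i), Finset.sum_ite_eq' Finset.univ j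
        (fun i => c i)] at h0
      simpa using h0
    have himg : w '' {i | i ∉ f} = Set.range (fun i : {i : Fin (n + 1) // i ∉ f} => w i.1) := by
      ext v
      constructor
      · rintro ⟨i, hi, rfl⟩; exact ⟨⟨i, hi⟩, rfl⟩
      · rintro ⟨i, rfl⟩; exact ⟨i.1, i.2, rfl⟩
    have hspanrank : Module.finrank ℝ (Submodule.span ℝ (w '' {i | i ∉ f}))
        = n + 1 - f.card := by
      rw [himg, finrank_span_eq_card hli]
      rw [Fintype.card_subtype_compl]
      simp [Fintype.card_coe]
    rw [hKorank, hspanrank]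
end

section
/- Let T be an n-simplex with n ≥ 2, and let v ∈ P_k(T; ℝ^n) have vanishing tangential component on every facet of T. Then v vanishes identically on every subsimplex of T of dimension at most n−2. -/
/-- The linear functional `u ↦ ∑ l, u l * w l`. -/
def dotL {n : ℕ} (w : Fin n → ℝ) : (Fin n → ℝ) →ₗ[ℝ] ℝ where
  toFun u := ∑ l, u l * w l
  map_add' u v := by simp [add_mul, Finset.sum_add_distrib]
  map_smul' c u := by simp [Finset.mul_sum, mul_assoc]

lemma finrank_ker_dot {n : ℕ} (g : (Fin n → ℝ) →ₗ[ℝ] ℝ) (x0 : Fin n → ℝ)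
    (hx0 : g x0 ≠ 0) : Module.finrank ℝ (LinearMap.ker g) = n - 1 := by
  have hsurj : LinearMap.range g = ⊤ := by
    rw [LinearMap.range_eq_top]
    intro c
    exact ⟨(c * (g x0)⁻¹) • x0, by rw [map_smul, smul_eq_mul, mul_assoc, inv_mul_cancel₀ hx0, mul_one]⟩
  have h := g.finrank_range_add_finrank_ker
  rw [hsurj] at h
  rw [finrank_top] at h
  simp at h
  omega

/-- If `v ∈ P_k(T; ℝⁿ)` (with `n ≥ 2`) has vanishing tangential component on every facet of
the `n`-simplex `T` (affine basis `b`, barycentric coordinates `b.coord i`, facet unit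
normals `nF i`), then `v` vanishes identically on every subsimplex of dimension ≤ `n - 2`,
i.e. at every point whose barycentric coordinates are supported on at most `n - 1`
vertices. -/
theorem stmt16 (n k : ℕ) (hn : 2 ≤ n)
    (b : AffineBasis (Fin (n + 1)) ℝ (Fin n → ℝ))
    (nF : Fin (n + 1) → (Fin n → ℝ))
    (hnF1 : ∀ i, ∑ l, nF i l * nF i l = 1)
    (hnFperp : ∀ i, ∀ u : Fin n → ℝ, (b.coord i).linear u = 0 → ∑ l, u l * nF i l = 0)
    (v : (Fin n → ℝ) → (Fin n → ℝ))
    (hv : ∃ p : Fin n → MvPolynomial (Fin n) ℝ,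
      (∀ j, (p j).totalDegree ≤ k) ∧ ∀ x j, v x j = MvPolynomial.eval x (p j))
    (htan : ∀ i, ∀ x, b.coord i x = 0 → v x = (∑ l, v x l * nF i l) • nF i) :
    ∀ f : Finset (Fin (n + 1)), f.card ≤ n - 1 →
      ∀ x, (∀ j ∉ f, b.coord j x = 0) → v x = 0 := by
  intro f hf x hx
  by_contra hne
  -- two distinct indices outside `f`
  have hcard : 1 < (fᶜ : Finset (Fin (n + 1))).card := by
    rw [Finset.card_compl]
    simp only [Fintype.card_fin]
    omega
  obtain ⟨i₁, hi₁, i₂, hi₂, h12⟩ := Finset.one_lt_card.mp hcard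
  rw [Finset.mem_compl] at hi₁ hi₂
  have h1 := htan i₁ x (hx i₁ hi₁)
  have h2 := htan i₂ x (hx i₂ hi₂)
  set c₁ := ∑ l, v x l * nF i₁ l with hc₁
  set c₂ := ∑ l, v x l * nF i₂ l with hc₂
  have hc1ne : c₁ ≠ 0 := by
    intro h0
    rw [h0, zero_smul] at h1
    exact hne h1
  -- nF i₁ = t • nF i₂
  have hpar : nF i₁ = (c₁⁻¹ * c₂) • nF i₂ := by
    have : c₁⁻¹ • (v x) = c₁⁻¹ • (c₁ • nF i₁) := by rw [← h1]
    rw [smul_smul, inv_mul_cancel₀ hc1ne, one_smul] at this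
    rw [← this, h2, smul_smul]
  -- a third vertex
  have hm : (({i₁, i₂} : Finset (Fin (n + 1)))ᶜ).Nonempty := by
    rw [← Finset.card_pos, Finset.card_compl]
    have := Finset.card_insert_le i₁ ({i₂} : Finset (Fin (n + 1)))
    simp only [Fintype.card_fin, Finset.card_singleton] at this ⊢
    omega
  obtain ⟨m, hm⟩ := hm
  rw [Finset.mem_compl, Finset.mem_insert, Finset.mem_singleton] at hm
  push_neg at hm
  -- the test vector
  set u0 : Fin n → ℝ := b i₁ - b m with hu0
  have hvsub : ∀ i : Fin (n + 1), (b.coord i).linear u0 = b.coord i (b i₁) - b.coord i (b m) := by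
    intro i
    rw [hu0, ← vsub_eq_sub, (b.coord i).linearMap_vsub, vsub_eq_sub]
  have hlin2 : (b.coord i₂).linear u0 = 0 := by
    rw [hvsub, b.coord_apply, b.coord_apply, if_neg (Ne.symm h12), if_neg (Ne.symm hm.2)]
    ring
  have hlin1 : (b.coord i₁).linear u0 = 1 := by
    rw [hvsub, b.coord_apply, b.coord_apply, if_pos rfl, if_neg (Ne.symm hm.1)]
    ring
  -- kernels
  have hker_le : LinearMap.ker (b.coord i₁).linear ≤ LinearMap.ker (dotL (nF i₁)) := by
    intro u hu
    exact hnFperp i₁ u hu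
  have hd1 : dotL (nF i₁) (nF i₁) = 1 := hnF1 i₁
  have hfr1 : Module.finrank ℝ (LinearMap.ker (dotL (nF i₁))) = n - 1 :=
    finrank_ker_dot _ (nF i₁) (by rw [hd1]; norm_num)
  have hfr2 : Module.finrank ℝ (LinearMap.ker (b.coord i₁).linear) = n - 1 :=
    finrank_ker_dot _ u0 (by rw [hlin1]; norm_num)
  have hker_eq : LinearMap.ker (b.coord i₁).linear = LinearMap.ker (dotL (nF i₁)) :=
    Submodule.eq_of_le_of_finrank_eq hker_le (by rw [hfr1, hfr2])
  -- u0 is in ker (dotL (nF i₁))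
  have hd2 : dotL (nF i₂) u0 = 0 := hnFperp i₂ u0 hlin2
  have hd1u : dotL (nF i₁) u0 = 0 := by
    have : dotL (nF i₁) = (c₁⁻¹ * c₂) • dotL (nF i₂) := by
      ext u
      simp [dotL, hpar, Finset.mul_sum]
      ring_nf
      exact Finset.sum_congr rfl fun l _ => by ring
    rw [this]
    simp [hd2]
  have : (b.coord i₁).linear u0 = 0 := by
    have : u0 ∈ LinearMap.ker (b.coord i₁).linear := by
      rw [hker_eq]
      exact hd1u
    exact this
  rw [hlin1] at this
  norm_num at this
end
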